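/- Let σ : ℝ → ℝ be locally Lipschitz with σ(0)=0 and |σ(z)| = o(|z|(log|z|)^{α/2}) as |z|→∞ for some α ∈ (0,1). Define L_{σ_N} = sup_{z≠0} |σ_N(z)-σ_N(0)|/|z| where σ_N is the truncation of σ at level N. Then L_{σ_N} = o((log N)^{α/2}) as N → ∞. -/

import Mathlib

/-- If `σ` is locally Lipschitz, `σ(0)=0`, and `|σ(z)| = o(|z|(log|z|)^{α/2})` as
`|z|→∞`, then the growth rates `L_{σ_N}` of the truncations satisfy
`L_{σ_N} = o((log N)^{α/2})` as `N → ∞`. -/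
theorem truncated_growth_rate_little_o_sigma
    (α : ℝ) (hα : α ∈ Set.Ioo (0 : ℝ) 1)
    (σ : ℝ → ℝ)
    (hloc : ∀ K : Set ℝ, IsCompact K → ∃ L : NNReal, LipschitzOnWith L σ K)
    (h0 : σ 0 = 0)
    (hgrowth : ∀ ε : ℝ, 0 < ε → ∃ M : ℝ, ∀ z : ℝ, M ≤ |z| →
      |σ z| ≤ ε * (|z| * Real.log |z| ^ (α / 2))) :
    ∀ ε : ℝ, 0 < ε → ∃ M : ℝ, ∀ N : ℝ, M ≤ N →
      (⨆ z : {z : ℝ // z ≠ 0},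
          |σ ((min 1 (N / |z.1|)) * z.1) - σ ((min 1 (N / |(0:ℝ)|)) * 0)| / |z.1|)
        ≤ ε * Real.log N ^ (α / 2) := by
  obtain ⟨hα0, hα1⟩ := hα
  intro ε hε
  obtain ⟨M₁, hM₁⟩ := hgrowth (ε/2) (by positivity)
  set M₀ : ℝ := max M₁ (Real.exp 1) with hM₀def
  have hM₀pos : 0 < M₀ := lt_of_lt_of_le (Real.exp_pos 1) (le_max_right _ _)
  obtain ⟨L, hL⟩ := hloc (Set.Icc (-M₀) M₀) isCompact_Icc
  refine ⟨max (Real.exp (((L:ℝ)/ε) ^ ((2:ℝ)/α))) M₀, ?_⟩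
  intro N hN
  have hNM₀ : M₀ ≤ N := le_trans (le_max_right _ _) hN
  have hNpos : 0 < N := lt_of_lt_of_le hM₀pos hNM₀
  have hlogN1 : 1 ≤ Real.log N := by
    rw [← Real.log_exp 1]
    exact Real.log_le_log (Real.exp_pos 1) (le_trans (le_max_right _ _) hNM₀)
  have hlogNpos : (0:ℝ) ≤ Real.log N := le_trans zero_le_one hlogN1
  have hpow1 : (1:ℝ) ≤ Real.log N ^ (α/2) :=
    Real.one_le_rpow hlogN1 (by positivity)
  have hLbound : (L:ℝ) ≤ ε * Real.log N ^ (α/2) := by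
    have h1 : Real.exp (((L:ℝ)/ε) ^ ((2:ℝ)/α)) ≤ N := le_trans (le_max_left _ _) hN
    have h2 : ((L:ℝ)/ε) ^ ((2:ℝ)/α) ≤ Real.log N := by
      rw [← Real.log_exp (((L:ℝ)/ε) ^ ((2:ℝ)/α))]
      exact Real.log_le_log (Real.exp_pos _) h1
    have h3 : (((L:ℝ)/ε) ^ ((2:ℝ)/α)) ^ (α/2) ≤ Real.log N ^ (α/2) :=
      Real.rpow_le_rpow (Real.rpow_nonneg (by positivity) _) h2 (by positivity)
    have h4 : (((L:ℝ)/ε) ^ ((2:ℝ)/α)) ^ (α/2) = (L:ℝ)/ε := by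
      rw [← Real.rpow_mul (by positivity)]
      rw [show (2:ℝ)/α * (α/2) = 1 by field_simp, Real.rpow_one]
    rw [h4] at h3
    rw [div_le_iff₀ hε] at h3
    linarith [h3]
  haveI : Nonempty {z : ℝ // z ≠ 0} := ⟨⟨1, one_ne_zero⟩⟩
  apply ciSup_le
  rintro ⟨z, hz⟩
  simp only [mul_zero, h0, sub_zero]
  have hzpos : 0 < |z| := abs_pos.mpr hz
  set c := min 1 (N / |z|) with hc
  have hc0 : 0 ≤ c := le_min zero_le_one (by positivity)
  have hc1 : c ≤ 1 := min_le_left _ _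
  have hwabs : |c * z| = c * |z| := by rw [abs_mul, abs_of_nonneg hc0]
  have hwz : |c * z| ≤ |z| := by rw [hwabs]; nlinarith
  have hwN : |c * z| ≤ N := by
    rw [hwabs]
    calc c * |z| ≤ (N/|z|) * |z| :=
          mul_le_mul_of_nonneg_right (min_le_right _ _) hzpos.le
    _ = N := div_mul_cancel₀ _ hzpos.ne'
  by_cases hcase : |c * z| ≤ M₀
  · have hmem : c*z ∈ Set.Icc (-M₀) M₀ := Set.mem_Icc.mpr (abs_le.mp hcase)
    have h0mem : (0:ℝ) ∈ Set.Icc (-M₀) M₀ := ⟨by linarith, hM₀pos.le⟩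
    have hd := hL.dist_le_mul (c*z) hmem 0 h0mem
    rw [Real.dist_eq, Real.dist_eq, sub_zero, h0, sub_zero] at hd
    have h1 : |σ (c*z)| ≤ (L:ℝ) * |z| :=
      le_trans hd (mul_le_mul_of_nonneg_left hwz L.coe_nonneg)
    rw [div_le_iff₀ hzpos]
    calc |σ (c*z)| ≤ (L:ℝ) * |z| := h1
    _ ≤ (ε * Real.log N ^ (α/2)) * |z| :=
        mul_le_mul_of_nonneg_right hLbound hzpos.le
  · push_neg at hcase
    have hM₁w : M₁ ≤ |c * z| := le_trans (le_max_left _ _) hcase.le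
    have hσw := hM₁ (c*z) hM₁w
    have hwpos : 0 < |c * z| := lt_trans hM₀pos hcase
    have hlogw0 : (0:ℝ) ≤ Real.log |c * z| := by
      rw [← Real.log_exp 1] at *
      have : Real.exp 1 ≤ |c * z| := le_trans (le_max_right _ _) hcase.le
      have := Real.log_le_log (Real.exp_pos 1) this
      linarith [this, Real.log_exp 1, Real.exp_pos 1]
    have hlogw : Real.log |c * z| ≤ Real.log N := Real.log_le_log hwpos hwN
    have hrp : Real.log |c * z| ^ (α/2) ≤ Real.log N ^ (α/2) :=
      Real.rpow_le_rpow hlogw0 hlogw (by positivity)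
    rw [div_le_iff₀ hzpos]
    calc |σ (c*z)| ≤ (ε/2) * (|c*z| * Real.log |c*z| ^ (α/2)) := hσw
    _ ≤ (ε/2) * (|z| * Real.log N ^ (α/2)) := by
        apply mul_le_mul_of_nonneg_left _ (by positivity)
        exact mul_le_mul hwz hrp (Real.rpow_nonneg hlogw0 _) hzpos.le
    _ = (ε/2) * Real.log N ^ (α/2) * |z| := by ring
    _ ≤ ε * Real.log N ^ (α/2) * |z| :=
        mul_le_mul_of_nonneg_right
          (mul_le_mul_of_nonneg_right (by linarith) (Real.rpow_nonneg hlogNpos _))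
          hzpos.le
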